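/- Let (Ξ, ν) be a σ-finite measure space and ψ = (ψ_1, …, ψ_l) : Ξ → ℝ^l measurable, and suppose the representation is minimal, i.e., for every c ∈ ℝ^l with c ≠ 0 the function x ↦ ⟨c, ψ(x)⟩ is not ν-a.e. equal to a constant. Then the mean mapping Λ is injective on the interior of A: if α, β lie in the interior of A = {α : Z(α) < ∞} and Λ(α) = Λ(β), then α = β. -/

import Mathlib

open MeasureTheory Real
open scoped ENNReal

/-- The partition function `Z(α) = ∫ exp(-⟨α, ψ(x)⟩) dν(x)`, valued in `ℝ≥0∞`. -/
noncomputable def partitionZ {Ξ : Type*} [MeasurableSpace Ξ] (ν : Measure Ξ) {l : ℕ}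
    (ψ : Ξ → Fin l → ℝ) (α : Fin l → ℝ) : ℝ≥0∞ :=
  ∫⁻ x, ENNReal.ofReal (Real.exp (-(∑ k, α k * ψ x k))) ∂ν

/-- The mean mapping `Λ(α) = E_α[ψ]`. -/
noncomputable def meanMap {Ξ : Type*} [MeasurableSpace Ξ] (ν : Measure Ξ) {l : ℕ}
    (ψ : Ξ → Fin l → ℝ) (α : Fin l → ℝ) : Fin l → ℝ :=
  fun k => (∫ x, ψ x k * Real.exp (-(∑ i, α i * ψ x i)) ∂ν) /
    (∫ x, Real.exp (-(∑ i, α i * ψ x i)) ∂ν)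

section aux

variable {Ξ : Type*} [MeasurableSpace Ξ] {ν : Measure Ξ} {l : ℕ} {ψ : Ξ → Fin l → ℝ}

lemma meas_exp (hψ : Measurable ψ) (γ : Fin l → ℝ) :
    Measurable (fun x => Real.exp (-(∑ k, γ k * ψ x k))) := by
  apply Real.measurable_exp.comp
  apply Measurable.neg
  exact Finset.measurable_sum _ fun k _ => (measurable_const.mul ((measurable_pi_apply k).comp hψ))

lemma integrable_of_memA (hψ : Measurable ψ) {γ : Fin l → ℝ} (h : partitionZ ν ψ γ < ⊤) :
    Integrable (fun x => Real.exp (-(∑ k, γ k * ψ x k))) ν := by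
  refine ⟨(meas_exp hψ γ).aestronglyMeasurable, ?_⟩
  rw [hasFiniteIntegral_iff_ofReal (Filter.Eventually.of_forall fun x => (Real.exp_pos _).le)]
  exact h

lemma integrable_mul_of_interior (hψ : Measurable ψ) {α : Fin l → ℝ}
    (hα : α ∈ interior {γ : Fin l → ℝ | partitionZ ν ψ γ < ⊤}) (v : Fin l → ℝ) :
    Integrable (fun x => (∑ k, v k * ψ x k) * Real.exp (-(∑ k, α k * ψ x k))) ν := by
  rw [mem_interior_iff_mem_nhds, Metric.mem_nhds_iff] at hα
  obtain ⟨ε, hε, hball⟩ := hα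
  set δ : ℝ := ε / (2 * (‖v‖ + 1)) with hδdef
  have hvpos : (0:ℝ) < ‖v‖ + 1 := by positivity
  have hδ : 0 < δ := by positivity
  have hmem : ∀ s : ℝ, |s| ≤ δ → partitionZ ν ψ (α + s • v) < ⊤ := by
    intro s hs
    apply hball
    rw [Metric.mem_ball, dist_eq_norm, add_sub_cancel_left, norm_smul]
    calc ‖s‖ * ‖v‖ ≤ δ * (‖v‖ + 1) := by
          apply mul_le_mul hs (by linarith) (norm_nonneg _) hδ.le
      _ = ε / 2 := by rw [hδdef, div_mul_eq_mul_div, mul_div_mul_right _ _ hvpos.ne']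
      _ < ε := by linarith
  have hp := integrable_of_memA hψ (hmem δ (le_of_eq (abs_of_pos hδ)))
  have hm := integrable_of_memA hψ (hmem (-δ) (le_of_eq (by rw [abs_neg, abs_of_pos hδ])))
  have hbound : ∀ x, ‖(∑ k, v k * ψ x k) * Real.exp (-(∑ k, α k * ψ x k))‖ ≤
      δ⁻¹ * (Real.exp (-(∑ k, (α + δ • v) k * ψ x k)) +
              Real.exp (-(∑ k, (α + (-δ) • v) k * ψ x k))) := by
    intro x
    set t := ∑ k, v k * ψ x k
    set a := ∑ k, α k * ψ x k
    have hsum : ∀ s : ℝ, ∑ k, (α + s • v) k * ψ x k = a + s * t := by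
      intro s
      simp only [Pi.add_apply, Pi.smul_apply, smul_eq_mul, add_mul, Finset.sum_add_distrib]
      rw [Finset.mul_sum]
      congr 1
      exact Finset.sum_congr rfl fun k _ => by ring
    rw [hsum, hsum]
    rw [norm_mul, Real.norm_eq_abs, Real.norm_eq_abs, abs_of_pos (Real.exp_pos _)]
    have key : |t| ≤ δ⁻¹ * (Real.exp (δ * t) + Real.exp (-(δ * t))) := by
      have h1 : δ * |t| ≤ Real.exp (δ * |t|) := by
        have := Real.add_one_le_exp (δ * |t|); linarith
      have h2 : Real.exp (δ * |t|) ≤ Real.exp (δ * t) + Real.exp (-(δ * t)) := by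
        rcases abs_cases t with ⟨h, _⟩ | ⟨h, _⟩
        · rw [h]; linarith [(Real.exp_pos (-(δ * t))).le]
        · rw [h, mul_neg]; linarith [(Real.exp_pos (δ * t)).le]
      have h3 : δ * |t| ≤ Real.exp (δ * t) + Real.exp (-(δ * t)) := h1.trans h2
      calc |t| = δ⁻¹ * (δ * |t|) := by field_simp
        _ ≤ δ⁻¹ * (Real.exp (δ * t) + Real.exp (-(δ * t))) := by
            apply mul_le_mul_of_nonneg_left h3 (inv_nonneg.mpr hδ.le)
    calc |t| * Real.exp (-a)
        ≤ (δ⁻¹ * (Real.exp (δ * t) + Real.exp (-(δ * t)))) * Real.exp (-a) :=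
          mul_le_mul_of_nonneg_right key (Real.exp_pos _).le
      _ = δ⁻¹ * (Real.exp (-(a + δ * t)) + Real.exp (-(a + -δ * t))) := by
          rw [show -(a + δ * t) = -(δ * t) + -a by ring, show -(a + -δ * t) = δ * t + -a by ring,
            Real.exp_add, Real.exp_add]
          ring
  have hmeas : AEStronglyMeasurable
      (fun x => (∑ k, v k * ψ x k) * Real.exp (-(∑ k, α k * ψ x k))) ν := by
    apply Measurable.aestronglyMeasurable
    exact (Finset.measurable_sum _ fun k _ =>
      measurable_const.mul ((measurable_pi_apply k).comp hψ)).mul (meas_exp hψ α)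
  exact Integrable.mono' ((hp.add hm).const_mul δ⁻¹) hmeas
    (Filter.Eventually.of_forall hbound)

end aux

set_option maxHeartbeats 1000000 in
/-- If the representation is minimal (no nontrivial linear combination of the potentials
is ν-a.e. constant), then the mean mapping `Λ` is injective on the interior of
`A = {α | Z(α) < ∞}`. -/
theorem minimal_meanMap_injective {Ξ : Type*} [MeasurableSpace Ξ]
    (ν : Measure Ξ) [SigmaFinite ν] {l : ℕ} (ψ : Ξ → Fin l → ℝ) (hψ : Measurable ψ)
    (hmin : ∀ c : Fin l → ℝ, c ≠ 0 → ¬ ∃ b : ℝ, ∀ᵐ x ∂ν, ∑ k, c k * ψ x k = b) :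
    ∀ α ∈ interior {α : Fin l → ℝ | partitionZ ν ψ α < ⊤},
      ∀ β ∈ interior {α : Fin l → ℝ | partitionZ ν ψ α < ⊤},
        meanMap ν ψ α = meanMap ν ψ β → α = β := by
  intro α hα β hβ hmean
  by_contra hne
  set c : Fin l → ℝ := β - α with hc
  have hcne : c ≠ 0 := sub_ne_zero_of_ne fun h => hne h.symm
  set fα : Ξ → ℝ := fun x => Real.exp (-(∑ k, α k * ψ x k)) with hfα
  set fβ : Ξ → ℝ := fun x => Real.exp (-(∑ k, β k * ψ x k)) with hfβ
  set Y : Ξ → ℝ := fun x => ∑ k, c k * ψ x k with hY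
  apply hmin c hcne
  by_cases hν : ν = 0
  · exact ⟨0, by simp [hν]⟩
  have hαA : partitionZ ν ψ α < ⊤ := by
    have h' : α ∈ {γ : Fin l → ℝ | partitionZ ν ψ γ < ⊤} := interior_subset hα
    exact h'
  have hβA : partitionZ ν ψ β < ⊤ := by
    have h' : β ∈ {γ : Fin l → ℝ | partitionZ ν ψ γ < ⊤} := interior_subset hβ
    exact h'
  have hfαint : Integrable fα ν := integrable_of_memA hψ hαA
  have hfβint : Integrable fβ ν := integrable_of_memA hψ hβA
  have hYfα : Integrable (fun x => Y x * fα x) ν := integrable_mul_of_interior hψ hα c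
  have hYfβ : Integrable (fun x => Y x * fβ x) ν := integrable_mul_of_interior hψ hβ c
  have hψfα : ∀ k, Integrable (fun x => ψ x k * fα x) ν := by
    intro k
    have := integrable_mul_of_interior hψ hα (Pi.single k 1)
    simpa [Pi.single_apply, Finset.sum_ite_eq, hfα] using this
  have hψfβ : ∀ k, Integrable (fun x => ψ x k * fβ x) ν := by
    intro k
    have := integrable_mul_of_interior hψ hβ (Pi.single k 1)
    simpa [Pi.single_apply, Finset.sum_ite_eq, hfβ] using this
  have hIα : 0 < ∫ x, fα x ∂ν := by
    rw [integral_pos_iff_support_of_nonneg (fun x => le_of_lt (by simp only [hfα]; exact Real.exp_pos _)) hfαint]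
    have hs : Function.support fα = Set.univ := by
      ext x; simp [hfα, (Real.exp_pos _).ne']
    rw [hs]
    exact Measure.measure_univ_pos.mpr hν
  have hIβ : 0 < ∫ x, fβ x ∂ν := by
    rw [integral_pos_iff_support_of_nonneg (fun x => le_of_lt (by simp only [hfβ]; exact Real.exp_pos _)) hfβint]
    have hs : Function.support fβ = Set.univ := by
      ext x; simp [hfβ, (Real.exp_pos _).ne']
    rw [hs]
    exact Measure.measure_univ_pos.mpr hν
  -- the mean-map equality in direction c
  have hk : ∀ k, (∫ x, ψ x k * fα x ∂ν) * (∫ x, fβ x ∂ν)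
      = (∫ x, ψ x k * fβ x ∂ν) * (∫ x, fα x ∂ν) := by
    intro k
    have h := congrFun hmean k
    simp only [meanMap] at h
    rw [show (∫ x, ψ x k * fα x ∂ν) = ∫ x, ψ x k * Real.exp (-(∑ i, α i * ψ x i)) ∂ν from rfl,
        show (∫ x, ψ x k * fβ x ∂ν) = ∫ x, ψ x k * Real.exp (-(∑ i, β i * ψ x i)) ∂ν from rfl,
        show (∫ x, fα x ∂ν) = ∫ x, Real.exp (-(∑ i, α i * ψ x i)) ∂ν from rfl,
        show (∫ x, fβ x ∂ν) = ∫ x, Real.exp (-(∑ i, β i * ψ x i)) ∂ν from rfl]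
    have hIα' : (∫ x, Real.exp (-(∑ i, α i * ψ x i)) ∂ν) ≠ 0 := ne_of_gt hIα
    have hIβ' : (∫ x, Real.exp (-(∑ i, β i * ψ x i)) ∂ν) ≠ 0 := ne_of_gt hIβ
    rw [div_eq_div_iff hIα' hIβ'] at h
    · exact h
  have expand : ∀ (γ : Fin l → ℝ),
      (∀ k, Integrable (fun x => ψ x k * Real.exp (-(∑ i, γ i * ψ x i))) ν) →
      ∫ x, Y x * Real.exp (-(∑ i, γ i * ψ x i)) ∂ν
        = ∑ k, c k * ∫ x, ψ x k * Real.exp (-(∑ i, γ i * ψ x i)) ∂ν := by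
    intro γ hint
    have hpt : ∀ x, Y x * Real.exp (-(∑ i, γ i * ψ x i))
        = ∑ k, c k * (ψ x k * Real.exp (-(∑ i, γ i * ψ x i))) := by
      intro x
      rw [hY, Finset.sum_mul]
      exact Finset.sum_congr rfl fun k _ => by ring
    simp_rw [hpt]
    rw [integral_finset_sum _ fun k _ => (hint k).const_mul (c k)]
    exact Finset.sum_congr rfl fun k _ => integral_const_mul _ _
  have hEF : (∫ x, Y x * fα x ∂ν) * (∫ x, fβ x ∂ν)
      = (∫ x, Y x * fβ x ∂ν) * (∫ x, fα x ∂ν) := by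
    rw [show (∫ x, Y x * fα x ∂ν) = ∫ x, Y x * Real.exp (-(∑ i, α i * ψ x i)) ∂ν from rfl,
        show (∫ x, Y x * fβ x ∂ν) = ∫ x, Y x * Real.exp (-(∑ i, β i * ψ x i)) ∂ν from rfl]
    rw [expand α (fun k => hψfα k), expand β (fun k => hψfβ k), Finset.sum_mul, Finset.sum_mul]
    exact Finset.sum_congr rfl fun k _ => by
      rw [mul_assoc, mul_assoc, hk k]
  -- the product function
  set H : Ξ × Ξ → ℝ := fun p => (Y p.1 - Y p.2) * (fα p.1 * fβ p.2 - fβ p.1 * fα p.2) with hH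
  have h1 : Integrable (fun p : Ξ × Ξ => (Y p.1 * fα p.1) * fβ p.2) (ν.prod ν) :=
    hYfα.mul_prod hfβint
  have h2 : Integrable (fun p : Ξ × Ξ => (Y p.1 * fβ p.1) * fα p.2) (ν.prod ν) :=
    hYfβ.mul_prod hfαint
  have h3 : Integrable (fun p : Ξ × Ξ => fα p.1 * (Y p.2 * fβ p.2)) (ν.prod ν) :=
    hfαint.mul_prod hYfβ
  have h4 : Integrable (fun p : Ξ × Ξ => fβ p.1 * (Y p.2 * fα p.2)) (ν.prod ν) :=
    hfβint.mul_prod hYfα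
  have hHeq : H = fun p : Ξ × Ξ => (((Y p.1 * fα p.1) * fβ p.2 - (Y p.1 * fβ p.1) * fα p.2)
      - (fα p.1 * (Y p.2 * fβ p.2) - fβ p.1 * (Y p.2 * fα p.2))) := by
    funext p; simp only [hH]; ring
  have hHint : Integrable H (ν.prod ν) := by
    rw [hHeq]; exact (h1.sub h2).sub (h3.sub h4)
  have h12 : Integrable (fun p : Ξ × Ξ => (Y p.1 * fα p.1) * fβ p.2 - (Y p.1 * fβ p.1) * fα p.2)
      (ν.prod ν) := h1.sub h2
  have h34 : Integrable (fun p : Ξ × Ξ => fα p.1 * (Y p.2 * fβ p.2) - fβ p.1 * (Y p.2 * fα p.2))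
      (ν.prod ν) := h3.sub h4
  have hHzero : ∫ p, H p ∂(ν.prod ν) = 0 := by
    have e1 := integral_prod_mul (μ := ν) (ν := ν) (fun x => Y x * fα x) fβ
    have e2 := integral_prod_mul (μ := ν) (ν := ν) (fun x => Y x * fβ x) fα
    have e3 := integral_prod_mul (μ := ν) (ν := ν) fα (fun x => Y x * fβ x)
    have e4 := integral_prod_mul (μ := ν) (ν := ν) fβ (fun x => Y x * fα x)
    rw [hHeq]
    simp only []
    rw [integral_sub h12 h34, integral_sub h1 h2, integral_sub h3 h4,
      e1, e2, e3, e4]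
    nlinarith [hEF]
  -- pointwise structure of H
  have hsplit : ∀ x, fβ x = fα x * Real.exp (-(Y x)) := by
    intro x
    rw [hfα, hfβ, hY]
    simp only
    rw [← Real.exp_add]
    congr 1
    have hb : ∀ k, β k = α k + c k := fun k => by simp [hc]
    rw [show (∑ k, β k * ψ x k) = ∑ k, (α k * ψ x k + c k * ψ x k) from
      Finset.sum_congr rfl fun k _ => by rw [hb k]; ring, Finset.sum_add_distrib]
    ring
  have hfactor : ∀ p : Ξ × Ξ, H p
      = (Y p.1 - Y p.2) * (Real.exp (-(Y p.2)) - Real.exp (-(Y p.1))) * (fα p.1 * fα p.2) := by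
    intro p
    rw [hH]
    simp only
    rw [hsplit p.1, hsplit p.2]
    ring
  have hfαpos : ∀ x, 0 < fα x := fun x => by rw [hfα]; exact Real.exp_pos _
  have hnn : ∀ p : Ξ × Ξ, 0 ≤ H p := by
    intro p
    rw [hfactor]
    apply mul_nonneg _ (mul_nonneg (hfαpos _).le (hfαpos _).le)
    rcases le_total (Y p.1) (Y p.2) with h | h
    · exact mul_nonneg_iff.mpr (Or.inr ⟨by linarith,
        sub_nonpos.mpr (Real.exp_le_exp.mpr (by linarith))⟩)
    · exact mul_nonneg (by linarith) (sub_nonneg.mpr (Real.exp_le_exp.mpr (by linarith)))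
  have himp : ∀ p : Ξ × Ξ, H p = 0 → Y p.1 = Y p.2 := by
    intro p hp
    by_contra hYne
    rw [hfactor] at hp
    have hpos : 0 < (Y p.1 - Y p.2) * (Real.exp (-(Y p.2)) - Real.exp (-(Y p.1))) := by
      rcases lt_or_gt_of_ne hYne with h | h
      · exact mul_pos_of_neg_of_neg (by linarith)
          (sub_neg.mpr (Real.exp_lt_exp.mpr (by linarith)))
      · exact mul_pos (by linarith) (sub_pos.mpr (Real.exp_lt_exp.mpr (by linarith)))
    have := mul_pos hpos (mul_pos (hfαpos p.1) (hfαpos p.2))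
    rw [hp] at this
    exact lt_irrefl 0 this
  have haezero : H =ᵐ[ν.prod ν] 0 :=
    (integral_eq_zero_iff_of_nonneg_ae (Filter.Eventually.of_forall hnn) hHint).mp hHzero
  have hae2 : ∀ᵐ p ∂(ν.prod ν), Y p.1 = Y p.2 := by
    filter_upwards [haezero] with p hp
    exact himp p hp
  have h5 : ∀ᵐ x ∂ν, ∀ᵐ y ∂ν, Y x = Y y := Measure.ae_ae_of_ae_prod hae2
  have : (ae ν).NeBot := ae_neBot.mpr hν
  obtain ⟨x0, hx0⟩ := h5.exists
  refine ⟨Y x0, ?_⟩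
  filter_upwards [hx0] with y hy
  exact hy.symm
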